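/- For every integer n ≥ 2 there exists a packing of n horocycles in the hyperbolic plane with exactly 2n − 3 tangencies. Concretely: there exist c : Fin n → ℝ² and r : Fin n → ℝ with 0 < r i < 1, ‖c i‖ = 1 − r i for all i, ‖c i − c j‖ ≥ r i + r j for all i ≠ j, and such that the number of unordered pairs {i, j} with i ≠ j and ‖c i − c j‖ = r i + r j equals 2n − 3. -/

import Mathlib

noncomputable def hpV (x y : ℝ) : EuclideanSpace ℝ (Fin 2) := !₂[x, y]

lemma hpV_norm (x y : ℝ) : ‖hpV x y‖ = Real.sqrt (x^2 + y^2) := by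
  simp [hpV, EuclideanSpace.norm_eq, Fin.sum_univ_two, sq_abs]

lemma hpV_sub (x y a b : ℝ) : hpV x y - hpV a b = hpV (x-a) (y-b) := by
  ext i; fin_cases i <;> simp [hpV]

noncomputable def hpC (K : ℝ) : EuclideanSpace ℝ (Fin 2) :=
  hpV ((K^2-1)/(K^2+2)) (-2*K/(K^2+2))

noncomputable def hpR (K : ℝ) : ℝ := 1/(K^2+2)

lemma hpA_pos (K : ℝ) : (0:ℝ) < K^2 + 2 := by positivity

lemma hpR_pos (K : ℝ) : 0 < hpR K := by unfold hpR; positivity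

lemma hpR_lt_one (K : ℝ) : hpR K < 1 := by
  rw [hpR, div_lt_one (hpA_pos K)]; nlinarith [sq_nonneg K]

lemma hpC_norm (K : ℝ) : ‖hpC K‖ = 1 - hpR K := by
  rw [hpC, hpV_norm, hpR]
  have h : ((K^2-1)/(K^2+2))^2 + (-2*K/(K^2+2))^2 = ((K^2+1)/(K^2+2))^2 := by
    field_simp; ring
  rw [h, Real.sqrt_sq (by positivity)]
  field_simp
  ring

lemma hpC_big_dist (K : ℝ) : ‖hpV (1/2) 0 - hpC K‖ = 1/2 + hpR K := by
  rw [hpC, hpV_sub, hpV_norm, hpR]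
  have h : (1/2 - (K^2-1)/(K^2+2))^2 + (0 - -2*K/(K^2+2))^2
      = ((K^2+4)/(2*(K^2+2)))^2 := by
    have := hpA_pos K; field_simp; ring
  rw [h, Real.sqrt_sq (by positivity)]
  have := hpA_pos K; field_simp; ring

lemma hpC_dist_sq (K L : ℝ) : ‖hpC K - hpC L‖^2 = (hpR K + hpR L)^2
    + ((K-L)^2-1)*(8*(K+L)^2+4*(K*L-2)^2)/((K^2+2)^2*(L^2+2)^2) := by
  rw [hpC, hpC, hpV_sub, hpV_norm,
    Real.sq_sqrt (by positivity), hpR, hpR]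
  have hA := hpA_pos K; have hB := hpA_pos L
  field_simp; ring

lemma hpC_dist_eq (K : ℝ) : ‖hpC K - hpC (K+1)‖ = hpR K + hpR (K+1) := by
  have h := hpC_dist_sq K (K+1)
  have h1 : ((K-(K+1))^2-1) = 0 := by ring
  rw [h1] at h; simp at h
  have h2 : 0 ≤ hpR K + hpR (K+1) := by
    have := hpR_pos K; have := hpR_pos (K+1); linarith
  nlinarith [norm_nonneg (hpC K - hpC (K+1))]

lemma hpC_dist_le (K L : ℝ) (h : 1 ≤ (K-L)^2) :
    hpR K + hpR L ≤ ‖hpC K - hpC L‖ := by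
  have hsq := hpC_dist_sq K L
  have hA := hpA_pos K; have hB := hpA_pos L
  have hpos : 0 ≤ ((K-L)^2-1)*(8*(K+L)^2+4*(K*L-2)^2)/((K^2+2)^2*(L^2+2)^2) := by
    apply div_nonneg _ (by positivity)
    apply mul_nonneg (by linarith) (by positivity)
  have h2 : 0 ≤ hpR K + hpR L := by have := hpR_pos K; have := hpR_pos L; linarith
  nlinarith [norm_nonneg (hpC K - hpC L)]

lemma hpC_dist_lt (K L : ℝ) (hK : 0 ≤ K) (hL : 0 ≤ L) (h : 4 ≤ (K-L)^2) :
    hpR K + hpR L < ‖hpC K - hpC L‖ := by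
  have hsq := hpC_dist_sq K L
  have hA := hpA_pos K; have hB := hpA_pos L
  have hG : 0 < 8*(K+L)^2+4*(K*L-2)^2 := by
    rcases eq_or_lt_of_le (by positivity : (0:ℝ) ≤ 8*(K+L)^2+4*(K*L-2)^2) with h'|h'
    · exfalso
      have h1 : K + L = 0 := by nlinarith [sq_nonneg (K+L), sq_nonneg (K*L-2)]
      have h2 : K = 0 := by linarith
      have h3 : L = 0 := by linarith
      rw [h2, h3] at h; norm_num at h
    · exact h'
  have hpos : 0 < ((K-L)^2-1)*(8*(K+L)^2+4*(K*L-2)^2)/((K^2+2)^2*(L^2+2)^2) := by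
    apply div_pos (mul_pos (by linarith) hG) (by positivity)
  have h2 : 0 ≤ hpR K + hpR L := by have := hpR_pos K; have := hpR_pos L; linarith
  nlinarith [norm_nonneg (hpC K - hpC L)]

lemma one_le_cast_sub_sq {a b : ℕ} (h : a ≠ b) : 1 ≤ ((a:ℝ) - b)^2 := by
  rcases Nat.lt_or_ge a b with hl | hg
  · have : (a:ℝ) + 1 ≤ b := by exact_mod_cast hl
    nlinarith
  · have hb : b < a := lt_of_le_of_ne hg (Ne.symm h)
    have : (b:ℝ) + 1 ≤ a := by exact_mod_cast hb
    nlinarith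

lemma four_le_cast_sub_sq {a b : ℕ} (h : a + 2 ≤ b) : 4 ≤ ((a:ℝ) - b)^2 := by
  have : (a:ℝ) + 2 ≤ b := by exact_mod_cast h
  nlinarith

/-- For every `n ≥ 2` there exists a packing of `n` horocycles in the
disk model of the hyperbolic plane with exactly `2n - 3` tangencies. -/
theorem exists_horocycle_packing_with_max_tangencies (n : ℕ) (hn : 2 ≤ n) :
    ∃ (c : Fin n → EuclideanSpace ℝ (Fin 2)) (r : Fin n → ℝ),
      (∀ i, 0 < r i) ∧ (∀ i, r i < 1) ∧
      (∀ i, ‖c i‖ = 1 - r i) ∧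
      (∀ i j, i ≠ j → r i + r j ≤ ‖c i - c j‖) ∧
      Set.ncard {p : Fin n × Fin n | p.1 < p.2 ∧ ‖c p.1 - c p.2‖ = r p.1 + r p.2}
        = 2 * n - 3 := by
  haveI : NeZero n := ⟨by omega⟩
  classical
  set c : Fin n → EuclideanSpace ℝ (Fin 2) :=
    fun i => if i.val = 0 then hpV (1/2) 0 else hpC ((i.val - 1 : ℕ) : ℝ) with hc
  set r : Fin n → ℝ :=
    fun i => if i.val = 0 then 1/2 else hpR ((i.val - 1 : ℕ) : ℝ) with hr
  -- the general inequality, with equality information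
  have key_le : ∀ i j : Fin n, i ≠ j → r i + r j ≤ ‖c i - c j‖ := by
    intro i j hij
    have hvij : i.val ≠ j.val := fun h => hij (Fin.ext h)
    by_cases hi : i.val = 0
    · have hj : j.val ≠ 0 := by omega
      simp only [hc, hr, hi, hj, if_true, if_false, if_pos rfl]
      rw [hpC_big_dist]
    · by_cases hj : j.val = 0
      · simp only [hc, hr, hi, hj, if_true, if_false]
        rw [norm_sub_rev, hpC_big_dist]
        linarith
      · simp only [hc, hr, hi, hj, if_false]
        apply hpC_dist_le
        exact one_le_cast_sub_sq (by omega)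
  refine ⟨c, r, ?_, ?_, ?_, key_le, ?_⟩
  · intro i
    by_cases hi : i.val = 0 <;> simp only [hr, hi, if_true, if_false]
    · norm_num
    · exact hpR_pos _
  · intro i
    by_cases hi : i.val = 0 <;> simp only [hr, hi, if_true, if_false]
    · norm_num
    · exact hpR_lt_one _
  · intro i
    by_cases hi : i.val = 0 <;> simp only [hc, hr, hi, if_true, if_false]
    · rw [hpV_norm]; rw [show (1/2:ℝ)^2 + 0^2 = (1/2)^2 by ring,
        Real.sqrt_sq (by norm_num)]; norm_num
    · exact hpC_norm _
  -- counting
  have hset : {p : Fin n × Fin n | p.1 < p.2 ∧ ‖c p.1 - c p.2‖ = r p.1 + r p.2}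
      = ↑(Finset.univ.filter (fun p : Fin n × Fin n =>
          (p.1.val = 0 ∧ 0 < p.2.val) ∨ (0 < p.1.val ∧ p.2.val = p.1.val + 1))) := by
    ext p
    simp only [Set.mem_setOf_eq, Finset.coe_filter, Finset.mem_univ, true_and,
      Set.mem_setOf_eq]
    constructor
    · rintro ⟨hlt, heq⟩
      have hvlt : p.1.val < p.2.val := hlt
      by_cases h1 : p.1.val = 0
      · exact Or.inl ⟨h1, by omega⟩
      · refine Or.inr ⟨by omega, ?_⟩
        by_contra hne
        have h2 : p.2.val ≠ 0 := by omega
        have hstep : (p.1.val - 1) + 2 ≤ p.2.val - 1 := by omega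
        have hd := hpC_dist_lt ((p.1.val - 1 : ℕ) : ℝ) ((p.2.val - 1 : ℕ) : ℝ)
          (by positivity) (by positivity) (four_le_cast_sub_sq hstep)
        simp only [hc, hr, h1, h2, if_false] at heq
        linarith [heq ▸ hd]
    · rintro (⟨h1, h2⟩ | ⟨h1, h2⟩)
      · have h2' : p.2.val ≠ 0 := by omega
        refine ⟨by rw [Fin.lt_def]; omega, ?_⟩
        simp only [hc, hr, h1, h2', if_true, if_false, if_pos rfl]
        rw [hpC_big_dist]
      · have h1' : p.1.val ≠ 0 := by omega
        have h2' : p.2.val ≠ 0 := by omega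
        refine ⟨by rw [Fin.lt_def]; omega, ?_⟩
        simp only [hc, hr, h1', h2', if_false]
        have hcast : ((p.2.val - 1 : ℕ) : ℝ) = ((p.1.val - 1 : ℕ) : ℝ) + 1 := by
          have : p.2.val - 1 = (p.1.val - 1) + 1 := by omega
          rw [this]; push_cast; ring
        rw [hcast]
        exact hpC_dist_eq _
  rw [hset, Set.ncard_coe_finset]
  rw [Finset.filter_or]
  rw [Finset.card_union_of_disjoint]
  · have h1 : (Finset.univ.filter (fun p : Fin n × Fin n => p.1.val = 0 ∧ 0 < p.2.val)).card
        = (Finset.Ico 1 n).card := by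
      apply Finset.card_bij (fun (p : Fin n × Fin n) _ => p.2.val)
      · intro p hp; simp at hp ⊢; omega
      · intro p hp q hq hpq
        simp only [Finset.mem_filter] at hp hq
        refine Prod.ext (Fin.ext ?_) (Fin.ext hpq)
        omega
      · intro a ha
        simp at ha
        exact ⟨(⟨0, by omega⟩, ⟨a, by omega⟩), by simp only [Finset.mem_filter, Finset.mem_univ, true_and, Fin.val_mk]; omega, rfl⟩
    have h2 : (Finset.univ.filter (fun p : Fin n × Fin n => 0 < p.1.val ∧ p.2.val = p.1.val + 1)).card
        = (Finset.Ico 1 (n-1)).card := by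
      apply Finset.card_bij (fun (p : Fin n × Fin n) _ => p.1.val)
      · intro p hp; simp at hp ⊢; omega
      · intro p hp q hq hpq
        simp only [Finset.mem_filter] at hp hq
        refine Prod.ext (Fin.ext hpq) (Fin.ext ?_)
        omega
      · intro a ha
        simp at ha
        exact ⟨(⟨a, by omega⟩, ⟨a+1, by omega⟩), Finset.mem_filter.mpr ⟨Finset.mem_univ _, show 0 < a by omega, rfl⟩, rfl⟩
    rw [h1, h2, Nat.card_Ico, Nat.card_Ico]; omega
  · rw [Finset.disjoint_left]
    intro p h1 h2
    simp at h1 h2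
    omega
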